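/- arXiv:1503.00298 — 2 statements merged into one kernel-verified Lean document; each statement's English description precedes it below -/
import Mathlib

section
/- Let X be a normed space, ρ : G → GL(X) a representation, (g_k) a sequence in G, and define for f ∈ X the quantity ‖f‖_* = max(‖f‖, sup_{j≥0} 2^{-j-1} sup_{k_0,…,k_j ≥ 0} ‖∏_{i=0}^{j}(ρ(g_{k_i}) − Id)f‖) (allowing value +∞). Then on the subspace X_* = {f : ‖f‖_* < ∞}, ‖·‖_* is a norm and every operator ρ(g_p) satisfies ‖ρ(g_p)f‖_* ≤ 3‖f‖_* for all f ∈ X_* and all p ≥ 0. -/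
/-- The family (indexed by a tuple `(j, k_0, …, k_j)`) of quantities
`2^{-j-1} ‖∏_{i=0}^{j} (ρ(g_{k_i}) − Id) f‖` entering the definition of `‖f‖_*`. -/
noncomputable def starSeq {G X : Type*} [CommGroup G] [NormedAddCommGroup X]
    [NormedSpace ℂ X] (ρ : G →* (X →L[ℂ] X)) (g : ℕ → G) (f : X) :
    (Σ j : ℕ, Fin (j + 1) → ℕ) → ℝ :=
  fun i => (2 : ℝ)⁻¹ ^ (i.1 + 1) *
    ‖(List.ofFn fun t : Fin (i.1 + 1) => ρ (g (i.2 t)) - 1).prod f‖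

/-- The renormed quantity
`‖f‖_* = max(‖f‖, sup_{j, k_0,…,k_j} 2^{-j-1} ‖∏ (ρ(g_{k_i}) − Id) f‖)`. -/
noncomputable def starNorm {G X : Type*} [CommGroup G] [NormedAddCommGroup X]
    [NormedSpace ℂ X] (ρ : G →* (X →L[ℂ] X)) (g : ℕ → G) (f : X) : ℝ :=
  max ‖f‖ (⨆ i, starSeq ρ g f i)

section Aux

variable {G X : Type*} [CommGroup G] [NormedAddCommGroup X] [NormedSpace ℂ X]
  (ρ : G →* (X →L[ℂ] X)) (g : ℕ → G)

/-- The product operator attached to an index tuple. -/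
noncomputable def prodOp (i : Σ j : ℕ, Fin (j + 1) → ℕ) : X →L[ℂ] X :=
  (List.ofFn fun t : Fin (i.1 + 1) => ρ (g (i.2 t)) - 1).prod

lemma starSeq_eq (f : X) (i : Σ j : ℕ, Fin (j + 1) → ℕ) :
    starSeq ρ g f i = (2 : ℝ)⁻¹ ^ (i.1 + 1) * ‖prodOp ρ g i f‖ := rfl

instance : Nonempty (Σ j : ℕ, Fin (j + 1) → ℕ) := ⟨⟨0, fun _ => 0⟩⟩

lemma starSeq_nonneg (f : X) (i : Σ j : ℕ, Fin (j + 1) → ℕ) : 0 ≤ starSeq ρ g f i :=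
  mul_nonneg (by positivity) (norm_nonneg _)

lemma prodOp_snoc' (j : ℕ) (k : Fin (j + 1) → ℕ) (p : ℕ) :
    prodOp ρ g ⟨j + 1, Fin.snoc k p⟩ = prodOp ρ g ⟨j, k⟩ * (ρ (g p) - 1) := by
  simp only [prodOp]
  rw [List.ofFn_succ', List.prod_concat]
  simp [Fin.snoc_castSucc, Fin.snoc_last]

lemma prodOp_snoc (i : Σ j : ℕ, Fin (j + 1) → ℕ) (p : ℕ) :
    prodOp ρ g ⟨i.1 + 1, Fin.snoc i.2 p⟩ = prodOp ρ g i * (ρ (g p) - 1) := by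
  obtain ⟨j, k⟩ := i
  exact prodOp_snoc' ρ g j k p

lemma starSeq_key (f : X) (p : ℕ) (i : Σ j : ℕ, Fin (j + 1) → ℕ) :
    starSeq ρ g (ρ (g p) f) i ≤
      2 * starSeq ρ g f ⟨i.1 + 1, Fin.snoc i.2 p⟩ + starSeq ρ g f i := by
  have h1 : prodOp ρ g ⟨i.1 + 1, Fin.snoc i.2 p⟩ f
      = prodOp ρ g i ((ρ (g p) - 1) f) := by
    rw [prodOp_snoc]; rfl
  have h2 : prodOp ρ g i (ρ (g p) f)
      = prodOp ρ g i ((ρ (g p) - 1) f) + prodOp ρ g i f := by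
    rw [← map_add]
    congr 1
    simp [ContinuousLinearMap.sub_apply, ContinuousLinearMap.one_apply]
  rw [starSeq_eq, starSeq_eq, starSeq_eq, h1]
  have hc : (2 : ℝ) * ((2 : ℝ)⁻¹ ^ (i.1 + 1 + 1)) = (2 : ℝ)⁻¹ ^ (i.1 + 1) := by
    rw [pow_succ]; ring
  rw [← mul_assoc, hc, ← mul_add]
  refine mul_le_mul_of_nonneg_left ?_ (by positivity)
  rw [h2]
  exact norm_add_le _ _

end Aux

/-- on the subspace `X_* = {f : ‖f‖_* < ∞}` (expressed via boundedness of the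
family `starSeq`), `‖·‖_*` is a norm, `X_*` is invariant under each `ρ(g_p)`, and
`‖ρ(g_p) f‖_* ≤ 3 ‖f‖_*` for all `p` and all `f ∈ X_*`. -/
theorem stmt_17 (G X : Type*) [CommGroup G] [NormedAddCommGroup X] [NormedSpace ℂ X]
    (ρ : G →* (X →L[ℂ] X)) (g : ℕ → G) (f f' : X)
    (hf : BddAbove (Set.range (starSeq ρ g f)))
    (hf' : BddAbove (Set.range (starSeq ρ g f'))) :
    0 ≤ starNorm ρ g f ∧
    starNorm ρ g (0 : X) = 0 ∧
    (starNorm ρ g f = 0 → f = 0) ∧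
    (∀ c : ℂ, starNorm ρ g (c • f) = ‖c‖ * starNorm ρ g f) ∧
    (BddAbove (Set.range (starSeq ρ g (f + f'))) ∧
      starNorm ρ g (f + f') ≤ starNorm ρ g f + starNorm ρ g f') ∧
    (∀ p : ℕ, BddAbove (Set.range (starSeq ρ g (ρ (g p) f))) ∧
      starNorm ρ g (ρ (g p) f) ≤ 3 * starNorm ρ g f) := by
  have hzero : ∀ i, starSeq ρ g (0 : X) i = 0 := by
    intro i; rw [starSeq_eq, map_zero, norm_zero, mul_zero]
  have hsmul : ∀ (c : ℂ) i, starSeq ρ g (c • f) i = ‖c‖ * starSeq ρ g f i := by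
    intro c i
    rw [starSeq_eq, starSeq_eq, map_smul, norm_smul]
    simp; ring
  have hadd : ∀ i, starSeq ρ g (f + f') i ≤ starSeq ρ g f i + starSeq ρ g f' i := by
    intro i
    rw [starSeq_eq, starSeq_eq, starSeq_eq, map_add, ← mul_add]
    exact mul_le_mul_of_nonneg_left (norm_add_le _ _) (by positivity)
  have hS : ∀ i, starSeq ρ g f i ≤ ⨆ j, starSeq ρ g f j := fun i => le_ciSup hf i
  have hS' : ∀ i, starSeq ρ g f' i ≤ ⨆ j, starSeq ρ g f' j := fun i => le_ciSup hf' i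
  have hS0 : 0 ≤ ⨆ j, starSeq ρ g f j :=
    le_trans (starSeq_nonneg ρ g f _) (hS ⟨0, fun _ => 0⟩)
  have hnf : ‖f‖ ≤ starNorm ρ g f := le_max_left _ _
  have hSf : (⨆ j, starSeq ρ g f j) ≤ starNorm ρ g f := le_max_right _ _
  refine ⟨le_trans (norm_nonneg f) hnf, ?_, ?_, ?_, ?_, ?_⟩
  · -- starNorm 0 = 0
    have : (⨆ i, starSeq ρ g (0 : X) i) = 0 := by
      simp only [hzero]; exact ciSup_const
    rw [starNorm, this, norm_zero, max_self]
  · -- starNorm f = 0 → f = 0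
    intro h
    have : ‖f‖ ≤ 0 := by rw [starNorm] at h; rw [← h]; exact le_max_left _ _
    exact norm_le_zero_iff.mp this
  · -- smul
    intro c
    have h1 : (⨆ i, starSeq ρ g (c • f) i) = ‖c‖ * ⨆ i, starSeq ρ g f i := by
      rw [Real.mul_iSup_of_nonneg (norm_nonneg c)]
      exact iSup_congr (hsmul c)
    rw [starNorm, starNorm, h1, norm_smul]
    exact (mul_max_of_nonneg _ _ (norm_nonneg c)).symm
  · -- triangle
    have hbdd : BddAbove (Set.range (starSeq ρ g (f + f'))) := by
      refine ⟨(⨆ j, starSeq ρ g f j) + ⨆ j, starSeq ρ g f' j, ?_⟩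
      rintro x ⟨i, rfl⟩
      exact le_trans (hadd i) (add_le_add (hS i) (hS' i))
    refine ⟨hbdd, ?_⟩
    rw [starNorm]
    refine max_le ?_ ?_
    · calc ‖f + f'‖ ≤ ‖f‖ + ‖f'‖ := norm_add_le _ _
        _ ≤ _ := add_le_add (le_max_left _ _) (le_max_left _ _)
    · refine ciSup_le fun i => ?_
      calc starSeq ρ g (f + f') i ≤ starSeq ρ g f i + starSeq ρ g f' i := hadd i
        _ ≤ (⨆ j, starSeq ρ g f j) + ⨆ j, starSeq ρ g f' j := add_le_add (hS i) (hS' i)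
        _ ≤ _ := add_le_add (le_max_right _ _) (le_max_right _ _)
  · -- ρ (g p)
    intro p
    have hkey : ∀ i, starSeq ρ g (ρ (g p) f) i ≤ 3 * ⨆ j, starSeq ρ g f j := by
      intro i
      calc starSeq ρ g (ρ (g p) f) i
          ≤ 2 * starSeq ρ g f ⟨i.1 + 1, Fin.snoc i.2 p⟩ + starSeq ρ g f i :=
            starSeq_key ρ g f p i
        _ ≤ 2 * (⨆ j, starSeq ρ g f j) + ⨆ j, starSeq ρ g f j :=
            add_le_add (by linarith [hS ⟨i.1 + 1, Fin.snoc i.2 p⟩]) (hS i)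
        _ = 3 * ⨆ j, starSeq ρ g f j := by ring
    have hbdd : BddAbove (Set.range (starSeq ρ g (ρ (g p) f))) := by
      refine ⟨3 * ⨆ j, starSeq ρ g f j, ?_⟩
      rintro x ⟨i, rfl⟩
      exact hkey i
    refine ⟨hbdd, ?_⟩
    rw [starNorm]
    refine max_le ?_ ?_
    · -- ‖ρ (g p) f‖ ≤ 3 * starNorm f
      have h0 : ‖(ρ (g p) - 1) f‖ = 2 * starSeq ρ g f ⟨0, fun _ => p⟩ := by
        rw [starSeq_eq]
        have : prodOp ρ g ⟨0, fun _ => p⟩ = ρ (g p) - 1 := by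
          simp [prodOp]
        rw [this]
        simp only [zero_add, pow_one]
        ring
      have h1 : ‖ρ (g p) f‖ ≤ ‖(ρ (g p) - 1) f‖ + ‖f‖ := by
        have : ρ (g p) f = (ρ (g p) - 1) f + f := by
          simp [ContinuousLinearMap.sub_apply, ContinuousLinearMap.one_apply]
        rw [this]; exact norm_add_le _ _
      have h2 : starSeq ρ g f ⟨0, fun _ => p⟩ ≤ starNorm ρ g f :=
        le_trans (hS _) hSf
      calc ‖ρ (g p) f‖ ≤ ‖(ρ (g p) - 1) f‖ + ‖f‖ := h1
        _ = 2 * starSeq ρ g f ⟨0, fun _ => p⟩ + ‖f‖ := by rw [h0]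
        _ ≤ 2 * starNorm ρ g f + starNorm ρ g f := add_le_add (by linarith) hnf
        _ = 3 * starNorm ρ g f := by ring
    · refine ciSup_le fun i => ?_
      calc starSeq ρ g (ρ (g p) f) i ≤ 3 * ⨆ j, starSeq ρ g f j := hkey i
        _ ≤ 3 * starNorm ρ g f := by linarith
end

section
/- With the same setup as the previous statement (the characters ψ_s built from binary sequences s via the sequence (χ_n)), for any p ≥ 1 and any s, s' ∈ {0,1}^ℕ whose first p coordinates coincide, d(ψ_s, ψ_{s'}) ≤ (7/6)·d(χ_p, conj(χ_p)). Consequently, since d(χ_p, χ̄_p) → 0, for every ε > 0 every ε-separated subset of K = {ψ_s : s ∈ {0,1}^ℕ} for the pseudo-metric d has at most 2^p elements for suitable p, hence is finite; so K is an uncountable set in which every uniformly separated family is finite. -/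
open Filter Topology

/-- The sup pseudo-distance `d(a,b) = sup_k |a(g_k) − b(g_k)|` along the sequence `(g_k)`. -/
noncomputable def dSup {G : Type*} [CommGroup G] (g : ℕ → G) (a b : G →* Circle) : ℝ :=
  ⨆ k : ℕ, ‖(a (g k) : ℂ) - (b (g k) : ℂ)‖

/-- The character `ψ_{(s_1,…,s_n)} = ∏_{j<n} χ_j^{ε_j}` attached to a finite binary string,
where `ε_j = +1` if `s j = false` and `ε_j = −1` (conjugation, i.e. inversion in the
character group) if `s j = true`. -/
noncomputable def psiFin {G : Type*} [CommGroup G] (χ : ℕ → (G →* Circle))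
    (s : ℕ → Bool) (n : ℕ) : G →* Circle :=
  ∏ j ∈ Finset.range n, if s j then (χ j)⁻¹ else χ j

section Aux

variable {G : Type*} [CommGroup G]

private lemma dSup_bdd (g : ℕ → G) (a b : G →* Circle) :
    BddAbove (Set.range fun k => ‖(a (g k) : ℂ) - (b (g k) : ℂ)‖) := by
  refine ⟨2, ?_⟩
  rintro _ ⟨k, rfl⟩
  calc ‖(a (g k) : ℂ) - (b (g k) : ℂ)‖
      ≤ ‖(a (g k) : ℂ)‖ + ‖(b (g k) : ℂ)‖ := by
        simpa using norm_sub_le_norm_sub_add_norm_sub (a (g k) : ℂ) 0 (b (g k) : ℂ)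
    _ = 2 := by rw [Circle.norm_coe, Circle.norm_coe]; norm_num

private lemma apply_le_dSup (g : ℕ → G) (a b : G →* Circle) (k : ℕ) :
    ‖(a (g k) : ℂ) - (b (g k) : ℂ)‖ ≤ dSup g a b :=
  le_ciSup (dSup_bdd g a b) k

private lemma dSup_nonneg (g : ℕ → G) (a b : G →* Circle) : 0 ≤ dSup g a b :=
  (norm_nonneg _).trans (apply_le_dSup g a b 0)

private lemma dSup_le (g : ℕ → G) (a b : G →* Circle) {c : ℝ}
    (h : ∀ k, ‖(a (g k) : ℂ) - (b (g k) : ℂ)‖ ≤ c) : dSup g a b ≤ c :=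
  ciSup_le h

private lemma dSup_le_two (g : ℕ → G) (a b : G →* Circle) : dSup g a b ≤ 2 := by
  refine dSup_le g a b fun k => ?_
  calc ‖(a (g k) : ℂ) - (b (g k) : ℂ)‖
      ≤ ‖(a (g k) : ℂ)‖ + ‖(b (g k) : ℂ)‖ := by
        simpa using norm_sub_le_norm_sub_add_norm_sub (a (g k) : ℂ) 0 (b (g k) : ℂ)
    _ = 2 := by rw [Circle.norm_coe, Circle.norm_coe]; norm_num

private lemma abs_inv_sub_one {u : ℂ} (hu : ‖u‖ = 1) :
    ‖u⁻¹ - 1‖ = ‖u - 1‖ := by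
  have hu0 : u ≠ 0 := by intro h; rw [h] at hu; simp at hu
  have h1 : u⁻¹ - 1 = u⁻¹ * (1 - u) := by field_simp
  rw [h1, norm_mul, norm_inv, hu, inv_one, one_mul, norm_sub_rev]

private lemma abs_sub_inv_le {u : ℂ} (hu : ‖u‖ = 1) :
    ‖u - u⁻¹‖ ≤ 2 * ‖u - 1‖ := by
  calc ‖u - u⁻¹‖
      ≤ ‖u - 1‖ + ‖1 - u⁻¹‖ := norm_sub_le_norm_sub_add_norm_sub u 1 u⁻¹
    _ = ‖u - 1‖ + ‖u⁻¹ - 1‖ := by rw [norm_sub_rev 1 u⁻¹]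
    _ = 2 * ‖u - 1‖ := by rw [abs_inv_sub_one hu]; ring

private lemma diff_term {u : ℂ} (hu : ‖u‖ = 1) (b b' : Bool) :
    ‖(if b then u⁻¹ else u) - (if b' then u⁻¹ else u)‖
      ≤ 2 * ‖u - 1‖ := by
  have hnn : 0 ≤ 2 * ‖u - 1‖ := by positivity
  cases b <;> cases b' <;> simp only [if_true, if_false, Bool.false_eq_true]
  · simpa using hnn
  · simpa using abs_sub_inv_le hu
  · calc ‖u⁻¹ - u‖ = ‖u - u⁻¹‖ := norm_sub_rev _ _
      _ ≤ 2 * ‖u - 1‖ := abs_sub_inv_le hu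
  · simpa using hnn

private lemma prod_diff_le (z : ℕ → ℂ) (hz : ∀ j, ‖z j‖ = 1)
    (s s' : ℕ → Bool) (p : ℕ) (h : ∀ j ≤ p, s j = s' j) (n : ℕ) :
    ‖(∏ j ∈ Finset.range n, if s j then (z j)⁻¹ else z j)
        - ∏ j ∈ Finset.range n, if s' j then (z j)⁻¹ else z j‖
      ≤ ∑ j ∈ Finset.Ico (p + 1) n, 2 * ‖z j - 1‖ := by
  induction n with
  | zero => simp
  | succ n ih =>
    set A := ∏ j ∈ Finset.range n, if s j then (z j)⁻¹ else z j with hA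
    set A' := ∏ j ∈ Finset.range n, if s' j then (z j)⁻¹ else z j with hA'
    have habs : ∀ (t : ℕ → Bool) (j : ℕ),
        ‖if t j then (z j)⁻¹ else z j‖ = 1 := by
      intro t j
      split
      · rw [norm_inv, hz j, inv_one]
      · exact hz j
    have hA'1 : ‖A'‖ = 1 := by
      rw [hA', norm_prod]
      exact Finset.prod_eq_one fun j _ => habs s' j
    set c := (if s n then (z n)⁻¹ else z n) with hc
    set c' := (if s' n then (z n)⁻¹ else z n) with hc'
    have hcu : ‖c‖ = 1 := habs s n
    have step : ‖A * c - A' * c'‖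
        ≤ ‖A - A'‖ + ‖c - c'‖ := by
      calc ‖A * c - A' * c'‖
          ≤ ‖A * c - A' * c‖ + ‖A' * c - A' * c'‖ :=
            norm_sub_le_norm_sub_add_norm_sub _ _ _
        _ = ‖A - A'‖ * ‖c‖
              + ‖A'‖ * ‖c - c'‖ := by
            rw [← sub_mul, ← mul_sub, norm_mul, norm_mul]
        _ = ‖A - A'‖ + ‖c - c'‖ := by rw [hcu, hA'1]; ring
    rw [Finset.prod_range_succ, Finset.prod_range_succ, ← hA, ← hA', ← hc, ← hc']
    rcases le_or_gt (p + 1) n with hpn | hpn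
    · rw [Finset.sum_Ico_succ_top hpn]
      exact le_trans step (add_le_add ih (diff_term (hz n) (s n) (s' n)))
    · have hsn : s n = s' n := h n (by omega)
      have hcc : c = c' := by rw [hc, hc', hsn]
      have h1 : Finset.Ico (p + 1) (n + 1) = (∅ : Finset ℕ) := Finset.Ico_eq_empty (by omega)
      have h2 : Finset.Ico (p + 1) n = (∅ : Finset ℕ) := Finset.Ico_eq_empty (by omega)
      calc ‖A * c - A' * c'‖
          ≤ ‖A - A'‖ + ‖c - c'‖ := step
        _ = ‖A - A'‖ := by rw [hcc, sub_self, norm_zero, add_zero]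
        _ ≤ ∑ j ∈ Finset.Ico (p + 1) n, 2 * ‖z j - 1‖ := ih
        _ = ∑ j ∈ Finset.Ico (p + 1) (n + 1), 2 * ‖z j - 1‖ := by rw [h1, h2]

private lemma psiFin_coe (χ : ℕ → (G →* Circle)) (s : ℕ → Bool) (n : ℕ) (x : G) :
    ((psiFin χ s n x : Circle) : ℂ)
      = ∏ j ∈ Finset.range n, if s j then ((χ j x : ℂ))⁻¹ else (χ j x : ℂ) := by
  rw [psiFin, MonoidHom.finset_prod_apply]
  rw [show ((∏ j ∈ Finset.range n, (if s j then (χ j)⁻¹ else χ j) x : Circle) : ℂ)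
      = ∏ j ∈ Finset.range n, (((if s j then (χ j)⁻¹ else χ j) x : Circle) : ℂ) from
    map_prod Circle.coeHom _ _]
  refine Finset.prod_congr rfl fun j _ => ?_
  split
  · rw [MonoidHom.inv_apply, Circle.coe_inv]
  · rfl

private lemma geom_tail (a n : ℕ) :
    ∑ j ∈ Finset.Ico a n, ((4 : ℝ)⁻¹) ^ (j + 1) ≤ ((4 : ℝ)⁻¹) ^ (a + 1) * (4 / 3) := by
  rw [Finset.sum_Ico_eq_sum_range]
  calc ∑ k ∈ Finset.range (n - a), ((4 : ℝ)⁻¹) ^ (a + k + 1)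
      = ((4 : ℝ)⁻¹) ^ (a + 1) * ∑ k ∈ Finset.range (n - a), ((4 : ℝ)⁻¹) ^ k := by
        rw [Finset.mul_sum]
        exact Finset.sum_congr rfl fun k _ => by ring
    _ ≤ ((4 : ℝ)⁻¹) ^ (a + 1) * (4 / 3) := by
        refine mul_le_mul_of_nonneg_left ?_ (by positivity)
        calc ∑ k ∈ Finset.range (n - a), ((4 : ℝ)⁻¹) ^ k
            ≤ ∑' k : ℕ, ((4 : ℝ)⁻¹) ^ k :=
              Summable.sum_le_tsum _ (fun i _ => by positivity)
                (summable_geometric_of_lt_one (by norm_num) (by norm_num))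
          _ = 4 / 3 := by
              rw [tsum_geometric_of_lt_one (by norm_num) (by norm_num)]; norm_num

end Aux

/-- in the setup of the construction (non-trivial `χ_n` with `d(χ_0,1) < 1/4`,
`d(χ_n,1) < 4^{-(n+1)} d(χ_{n−1}, conj χ_{n−1})`, and `ψ_s` the pointwise limit of the
`ψ_{(s_0,…,s_{n−1})}`), if `s` and `s'` agree at all coordinates `≤ p` then
`d(ψ_s, ψ_{s'}) ≤ (7/6) d(χ_p, conj χ_p)`; consequently, for every `ε > 0`, every
`ε`-separated subset of `K = {ψ_s}` is finite. -/
theorem stmt_19 (G : Type*) [CommGroup G] (g : ℕ → G) (χ : ℕ → (G →* Circle))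
    (hnt : ∀ n : ℕ, χ n ≠ 1)
    (h0 : dSup g (χ 0) 1 < 1 / 4)
    (hn : ∀ n : ℕ, 1 ≤ n →
      dSup g (χ n) 1 < (4 : ℝ)⁻¹ ^ (n + 1) * dSup g (χ (n - 1)) (χ (n - 1))⁻¹)
    (ψ : (ℕ → Bool) → (G →* Circle))
    (hψ : ∀ (s : ℕ → Bool) (x : G),
      Tendsto (fun n : ℕ => ((psiFin χ s n) x : ℂ)) atTop (nhds ((ψ s x : ℂ)))) :
    (∀ (s s' : ℕ → Bool) (p : ℕ), (∀ j ≤ p, s j = s' j) →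
      dSup g (ψ s) (ψ s') ≤ (7 / 6) * dSup g (χ p) (χ p)⁻¹) ∧
    (∀ ε : ℝ, 0 < ε → ∀ S : Set (G →* Circle), S ⊆ Set.range ψ →
      (∀ a ∈ S, ∀ b ∈ S, a ≠ b → ε ≤ dSup g a b) → S.Finite) := by
  set D : ℕ → ℝ := fun n => dSup g (χ n) (χ n)⁻¹ with hD
  have hD_nonneg : ∀ n, 0 ≤ D n := fun n => dSup_nonneg g _ _
  -- the distance to the conjugate is at most twice the distance to 1
  have hχ1 : ∀ (a : G →* Circle) (k : ℕ),
      ‖(a (g k) : ℂ) - 1‖ ≤ dSup g a 1 := by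
    intro a k
    simpa using apply_le_dSup g a 1 k
  have hD2 : ∀ n, D n ≤ 2 * dSup g (χ n) 1 := by
    intro n
    refine dSup_le g _ _ fun k => ?_
    have hinv : (((χ n)⁻¹ (g k) : Circle) : ℂ) = ((χ n (g k) : ℂ))⁻¹ := by
      rw [MonoidHom.inv_apply, Circle.coe_inv]
    calc ‖(χ n (g k) : ℂ) - ((χ n)⁻¹ (g k) : ℂ)‖
        ≤ 2 * ‖(χ n (g k) : ℂ) - 1‖ := by
          rw [hinv]; exact abs_sub_inv_le (Circle.norm_coe _)
      _ ≤ 2 * dSup g (χ n) 1 := by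
          have := hχ1 (χ n) k; linarith
  have hn' : ∀ n : ℕ, 1 ≤ n → dSup g (χ n) 1 < (4 : ℝ)⁻¹ ^ (n + 1) * D (n - 1) := hn
  have hDdec : ∀ n, 1 ≤ n → D n ≤ (1 / 8) * D (n - 1) := by
    intro n hn1
    have h4 : (4 : ℝ)⁻¹ ^ (n + 1) ≤ 1 / 16 := by
      calc (4 : ℝ)⁻¹ ^ (n + 1) ≤ (4 : ℝ)⁻¹ ^ 2 :=
            pow_le_pow_of_le_one (by norm_num) (by norm_num) (by omega)
        _ = 1 / 16 := by norm_num
    have ha := hn' n hn1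
    have hb := hD2 n
    have h2 : (4 : ℝ)⁻¹ ^ (n + 1) * D (n - 1) ≤ (1 / 16) * D (n - 1) :=
      mul_le_mul_of_nonneg_right h4 (hD_nonneg _)
    linarith
  have hDmono : ∀ p n, p ≤ n → D n ≤ D p := by
    intro p n hpn
    induction n, hpn using Nat.le_induction with
    | base => exact le_rfl
    | succ n hpn ih =>
      have h1 := hDdec (n + 1) (by omega)
      simp only [Nat.add_sub_cancel] at h1
      have := hD_nonneg n
      linarith
  -- Part 1
  have part1 : ∀ (s s' : ℕ → Bool) (p : ℕ), (∀ j ≤ p, s j = s' j) →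
      dSup g (ψ s) (ψ s') ≤ (7 / 6) * D p := by
    intro s s' p hsp
    refine dSup_le g _ _ fun k => ?_
    have hz : ∀ j, ‖(χ j (g k) : ℂ)‖ = 1 := fun j => Circle.norm_coe _
    have hlim : Tendsto
        (fun n => ‖((psiFin χ s n) (g k) : ℂ) - ((psiFin χ s' n) (g k) : ℂ)‖)
        atTop (nhds (‖(ψ s (g k) : ℂ) - (ψ s' (g k) : ℂ)‖)) := by
      have := ((hψ s (g k)).sub (hψ s' (g k))).norm
      simpa using this
    refine le_of_tendsto hlim (Eventually.of_forall fun n => ?_)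
    have h4p : (4 : ℝ)⁻¹ ^ (p + 1 + 1) ≤ 1 / 16 := by
      calc (4 : ℝ)⁻¹ ^ (p + 1 + 1) ≤ (4 : ℝ)⁻¹ ^ 2 :=
            pow_le_pow_of_le_one (by norm_num) (by norm_num) (by omega)
        _ = 1 / 16 := by norm_num
    calc ‖((psiFin χ s n) (g k) : ℂ) - ((psiFin χ s' n) (g k) : ℂ)‖
        = ‖(∏ j ∈ Finset.range n, if s j then ((χ j (g k) : ℂ))⁻¹ else (χ j (g k) : ℂ))
            - ∏ j ∈ Finset.range n, if s' j then ((χ j (g k) : ℂ))⁻¹ else (χ j (g k) : ℂ)‖ := by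
          rw [psiFin_coe, psiFin_coe]
      _ ≤ ∑ j ∈ Finset.Ico (p + 1) n, 2 * ‖(χ j (g k) : ℂ) - 1‖ :=
          prod_diff_le _ hz s s' p hsp n
      _ ≤ ∑ j ∈ Finset.Ico (p + 1) n, 2 * ((4 : ℝ)⁻¹ ^ (j + 1) * D p) := by
          refine Finset.sum_le_sum fun j hj => ?_
          have hjp : p + 1 ≤ j := (Finset.mem_Ico.mp hj).1
          have hj1 : 1 ≤ j := by omega
          have hstep : ‖(χ j (g k) : ℂ) - 1‖ ≤ (4 : ℝ)⁻¹ ^ (j + 1) * D p := by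
            calc ‖(χ j (g k) : ℂ) - 1‖ ≤ dSup g (χ j) 1 := hχ1 (χ j) k
              _ ≤ (4 : ℝ)⁻¹ ^ (j + 1) * D (j - 1) := le_of_lt (hn' j hj1)
              _ ≤ (4 : ℝ)⁻¹ ^ (j + 1) * D p :=
                  mul_le_mul_of_nonneg_left (hDmono p (j - 1) (by omega)) (by positivity)
          linarith
      _ = 2 * D p * ∑ j ∈ Finset.Ico (p + 1) n, (4 : ℝ)⁻¹ ^ (j + 1) := by
          rw [Finset.mul_sum]
          exact Finset.sum_congr rfl fun j _ => by ring
      _ ≤ 2 * D p * ((4 : ℝ)⁻¹ ^ (p + 1 + 1) * (4 / 3)) := by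
          refine mul_le_mul_of_nonneg_left (geom_tail (p + 1) n) ?_
          have := hD_nonneg p; linarith
      _ ≤ (7 / 6) * D p := by nlinarith [hD_nonneg p]
  refine ⟨part1, ?_⟩
  -- Part 2
  intro ε hε S hS hsep
  have hD0 : D 0 ≤ 2 := dSup_le_two g _ _
  have hDpow : ∀ n, D n ≤ (1 / 8 : ℝ) ^ n * 2 := by
    intro n
    induction n with
    | zero => simpa using hD0
    | succ n ih =>
      have h1 := hDdec (n + 1) (by omega)
      simp only [Nat.add_sub_cancel] at h1
      calc D (n + 1) ≤ (1 / 8) * D n := h1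
        _ ≤ (1 / 8) * ((1 / 8 : ℝ) ^ n * 2) := by linarith [hD_nonneg n]
        _ = (1 / 8 : ℝ) ^ (n + 1) * 2 := by ring
  obtain ⟨m, hm⟩ := exists_pow_lt_of_lt_one (show (0 : ℝ) < (3 / 7) * ε by linarith)
    (show (1 / 8 : ℝ) < 1 by norm_num)
  have hDm : (7 / 6) * D m < ε := by
    have := hDpow m
    nlinarith
  have hchoice : ∀ a : S, ∃ t : ℕ → Bool, ψ t = (a : G →* Circle) := fun a => hS a.2
  classical
  let σ : S → (ℕ → Bool) := fun a => (hchoice a).choose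
  have hσ : ∀ a : S, ψ (σ a) = (a : G →* Circle) := fun a => (hchoice a).choose_spec
  let f : S → (Fin (m + 1) → Bool) := fun a j => σ a j
  have hf : Function.Injective f := by
    intro a b hab
    have hagree : ∀ j ≤ m, σ a j = σ b j := by
      intro j hj
      exact congrFun hab ⟨j, by omega⟩
    have hlt := part1 (σ a) (σ b) m hagree
    rw [hσ a, hσ b] at hlt
    by_contra hne
    have hne' : (a : G →* Circle) ≠ (b : G →* Circle) := fun h => hne (Subtype.ext h)
    have := hsep a a.2 b b.2 hne'
    linarith
  have : Finite S := Finite.of_injective f hf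
  exact S.toFinite
end
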